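/- Under hypotheses (P1)–(P3) with f(t,·) of class C¹ and Kγ/α < 1, for each fixed t ≥ 0 the map η ↦ G(t,η) is a C¹ diffeomorphism of ℝⁿ onto ℝⁿ. (Proof via Hadamard's global inverse function theorem: G(t,·) is C¹, its Jacobian determinant never vanishes, and |G(t,η)| → ∞ as |η| → ∞ since |G(t,η) − η| ≤ Kμ/α.) -/

import Mathlib

open Real MeasureTheory Filter Topology Set

variable {n : ℕ}
local notation "E" => EuclideanSpace ℝ (Fin n)

theorem opHasDerivAt {P : ℝ → (E →L[ℝ] E)} {P' : E →L[ℝ] E} {t : ℝ}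
    (h : ∀ ξ : E, HasDerivAt (fun r => P r ξ) (P' ξ) t) : HasDerivAt P P' t := by
  classical
  let b : Module.Basis (Fin n) ℝ E := (EuclideanSpace.basisFun (Fin n) ℝ).toBasis
  let e₁ : (E →ₗ[ℝ] E) ≃ₗ[ℝ] (E →L[ℝ] E) := LinearMap.toContinuousLinearMap
  let e₂ : (Fin n → E) ≃ₗ[ℝ] (E →ₗ[ℝ] E) := b.constr ℝ
  let e : (E →L[ℝ] E) ≃ₗ[ℝ] (Fin n → E) := (e₂.trans e₁).symm
  have he : ∀ (L : E →L[ℝ] E) i, e L i = L (b i) := by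
    intro L i
    have h1 : (e₂.trans e₁) (e L) = L := (e₂.trans e₁).apply_symm_apply L
    have h2 : e₂ (e L) = (L : E →ₗ[ℝ] E) := by
      apply e₁.injective
      simp only [LinearEquiv.trans_apply] at h1
      rw [h1]
      ext ξ
      simp [e₁]
    have := congrArg (fun (M : E →ₗ[ℝ] E) => M (b i)) h2
    simpa [e₂, Module.Basis.constr_basis] using this
  let ec : (E →L[ℝ] E) ≃L[ℝ] (Fin n → E) := e.toContinuousLinearEquiv
  have hd : HasDerivAt (fun r => ec (P r)) (ec P') t := by
    rw [hasDerivAt_pi]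
    intro i
    have hr : ∀ r, ec (P r) i = P r (b i) := fun r => he (P r) i
    have hP' : ec P' i = P' (b i) := he P' i
    simp only [hr, hP']
    exact h (b i)
  have h2 := (ec.symm.hasFDerivAt.comp_hasDerivAt t hd)
  have : (fun r => ec.symm (ec (P r))) = P := by
    funext r; exact ec.symm_apply_apply (P r)
  rw [Function.comp_def, this] at h2
  simpa using h2

section gronwall
variable {F : Type*} [NormedAddCommGroup F] [NormedSpace ℝ F]

theorem gronwallBound_mono_x {δ L ε : ℝ} (hδ : 0 ≤ δ) (hL : 0 < L) (hε : 0 ≤ ε)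
    {x₁ x₂ : ℝ} (hx : x₁ ≤ x₂) : gronwallBound δ L ε x₁ ≤ gronwallBound δ L ε x₂ := by
  rw [gronwallBound_of_K_ne_0 hL.ne']
  have h1 : Real.exp (L * x₁) ≤ Real.exp (L * x₂) :=
    Real.exp_le_exp.mpr (by nlinarith)
  have h2 : 0 ≤ ε / L := div_nonneg hε hL.le
  nlinarith

theorem norm_le_gronwallBound_of_norm_deriv_left_le {g g' : ℝ → F} {δ L ε : ℝ} {a b : ℝ}
    (hg : ContinuousOn g (Icc a b))
    (hg' : ∀ x ∈ Ioc a b, HasDerivWithinAt g (g' x) (Iic x) x)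
    (hb : ‖g b‖ ≤ δ)
    (bound : ∀ x ∈ Ioc a b, ‖g' x‖ ≤ L * ‖g x‖ + ε) :
    ∀ x ∈ Icc a b, ‖g x‖ ≤ gronwallBound δ L ε (b - x) := by
  intro x hx
  have hmt1 : MapsTo Neg.neg (Icc (-b) (-a)) (Icc a b) :=
    fun _ ht ↦ ⟨le_neg.mp ht.2, neg_le.mp ht.1⟩
  have hmt2 : MapsTo Neg.neg (Ico (-b) (-a)) (Ioc a b) :=
    fun _ ht ↦ ⟨lt_neg.mp ht.2, neg_le.mp ht.1⟩
  have key : ∀ s ∈ Icc (-b) (-a), ‖g (-s)‖ ≤ gronwallBound δ L ε (s - (-b)) := by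
    apply norm_le_gronwallBound_of_norm_deriv_right_le
      (f' := fun s => -g' (-s)) (hg.comp continuousOn_neg hmt1)
    · intro s hs
      have h1 := hg' (-s) (hmt2 hs)
      have h3 : MapsTo Neg.neg (Ici s) (Iic (-s)) := fun _ ht' ↦ Set.mem_Iic.mpr (neg_le_neg ht')
      have := HasFDerivWithinAt.comp_hasDerivWithinAt s h1
        (hasDerivAt_neg s).hasDerivWithinAt h3
      simpa using this
    · simpa using hb
    · intro s hs
      have := bound (-s) (hmt2 hs)
      simpa using this
  have := key (-x) ⟨neg_le_neg hx.2, neg_le_neg hx.1⟩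
  simpa [sub_neg_eq_add, add_comm, sub_eq_add_neg] using this

theorem gronwall_two_sided {g g' : ℝ → F} {δ L ε : ℝ} {a b τ : ℝ}
    (hδ : 0 ≤ δ) (hL : 0 < L) (hε : 0 ≤ ε)
    (ha : a ≤ τ) (hb : τ ≤ b)
    (hg' : ∀ x ∈ Icc a b, HasDerivAt g (g' x) x)
    (hτ : ‖g τ‖ ≤ δ)
    (bound : ∀ x ∈ Icc a b, ‖g' x‖ ≤ L * ‖g x‖ + ε) :
    ∀ x ∈ Icc a b, ‖g x‖ ≤ gronwallBound δ L ε (b - a) := by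
  have hcont : ContinuousOn g (Icc a b) :=
    fun x hx => ((hg' x hx).continuousAt).continuousWithinAt
  intro x hx
  rcases le_total x τ with hxτ | hxτ
  · have key := norm_le_gronwallBound_of_norm_deriv_left_le (a := a) (b := τ)
      (hcont.mono (Icc_subset_Icc le_rfl hb))
      (fun s hs => (hg' s ⟨hs.1.le, hs.2.trans hb⟩).hasDerivWithinAt) hτ
      (fun s hs => bound s ⟨hs.1.le, hs.2.trans hb⟩) x ⟨hx.1, hxτ⟩
    exact key.trans (gronwallBound_mono_x hδ hL hε (by linarith [hx.1, hx.2]))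
  · have key := norm_le_gronwallBound_of_norm_deriv_right_le (a := τ) (b := b)
      (hcont.mono (Icc_subset_Icc ha le_rfl))
      (fun s hs => (hg' s ⟨ha.trans hs.1, hs.2.le⟩).hasDerivWithinAt) hτ
      (fun s hs => bound s ⟨ha.trans hs.1, hs.2.le⟩) x ⟨hxτ, hx.2⟩
    exact key.trans (gronwallBound_mono_x hδ hL hε (by linarith [hx.1, hx.2]))

theorem ODE_uniq_fwd {v : ℝ → F → F} {Lc : NNReal} (hv : ∀ s, LipschitzWith Lc (v s))
    {u w : ℝ → F} {a b : ℝ}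
    (hu : ∀ s ∈ Icc a b, HasDerivAt u (v s (u s)) s)
    (hw : ∀ s ∈ Icc a b, HasDerivAt w (v s (w s)) s)
    (hab : u a = w a) : Set.EqOn u w (Icc a b) := by
  apply ODE_solution_unique_of_mem_Icc_right (v := v) (s := fun _ => Set.univ)
    (fun s _ => (hv s).lipschitzOnWith (s := Set.univ))
    (fun x hx => ((hu x hx).continuousAt).continuousWithinAt)
    (fun x hx => (hu x (Ico_subset_Icc_self hx)).hasDerivWithinAt)
    (fun x _ => Set.mem_univ _)
    (fun x hx => ((hw x hx).continuousAt).continuousWithinAt)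
    (fun x hx => (hw x (Ico_subset_Icc_self hx)).hasDerivWithinAt)
    (fun x _ => Set.mem_univ _) hab

theorem ODE_uniq_bwd {v : ℝ → F → F} {Lc : NNReal} (hv : ∀ s, LipschitzWith Lc (v s))
    {u w : ℝ → F} {a b : ℝ}
    (hu : ∀ s ∈ Icc a b, HasDerivAt u (v s (u s)) s)
    (hw : ∀ s ∈ Icc a b, HasDerivAt w (v s (w s)) s)
    (hab : u b = w b) : Set.EqOn u w (Icc a b) := by
  apply ODE_solution_unique_of_mem_Icc_left (v := v) (s := fun _ => Set.univ)
    (fun s _ => (hv s).lipschitzOnWith (s := Set.univ))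
    (fun x hx => ((hu x hx).continuousAt).continuousWithinAt)
    (fun x hx => (hu x (Ioc_subset_Icc_self hx)).hasDerivWithinAt)
    (fun x _ => Set.mem_univ _)
    (fun x hx => ((hw x hx).continuousAt).continuousWithinAt)
    (fun x hx => (hw x (Ioc_subset_Icc_self hx)).hasDerivWithinAt)
    (fun x _ => Set.mem_univ _) hab

end gronwall
set_option maxHeartbeats 1600000 in
theorem stmt18 (n : ℕ) (K α γ μ M : ℝ)
    (hK : 1 ≤ K) (hα : 0 < α) (hγ : 0 < γ) (hμ : 0 < μ) (hM : 0 < M)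
    (A : ℝ → (EuclideanSpace ℝ (Fin n)) →L[ℝ] (EuclideanSpace ℝ (Fin n)))
    (hAcont : Continuous A) (hAbdd : ∀ t, 0 ≤ t → ‖A t‖ ≤ M)
    (Φ : ℝ → ℝ → ((EuclideanSpace ℝ (Fin n)) →L[ℝ] (EuclideanSpace ℝ (Fin n))))
    (hΦid : ∀ s, Φ s s = ContinuousLinearMap.id ℝ (EuclideanSpace ℝ (Fin n)))
    (hΦderiv : ∀ s ξ t, HasDerivAt (fun r => Φ r s ξ) (A t (Φ t s ξ)) t)
    (hΦcocycle : ∀ t s r, (Φ t s).comp (Φ s r) = Φ t r)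
    (hΦdecay : ∀ s t, 0 ≤ s → s ≤ t → ‖Φ t s‖ ≤ K * Real.exp (-α * (t - s)))
    (f : ℝ → (EuclideanSpace ℝ (Fin n)) → (EuclideanSpace ℝ (Fin n)))
    (hfcont : Continuous fun p : ℝ × (EuclideanSpace ℝ (Fin n)) => f p.1 p.2)
    (hflip : ∀ t u v, 0 ≤ t → ‖f t u - f t v‖ ≤ γ * ‖u - v‖)
    (hfbdd : ∀ t u, 0 ≤ t → ‖f t u‖ ≤ μ)
    (hsmall : K * γ / α < 1)
    (y : ℝ → (EuclideanSpace ℝ (Fin n)) → ℝ → (EuclideanSpace ℝ (Fin n)))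
    (hyinit : ∀ τ η, y τ η τ = η)
    (hyderiv : ∀ τ η t, 0 ≤ t → HasDerivAt (y τ η) (A t (y τ η t) + f t (y τ η t)) t)
    (Df : ℝ → (EuclideanSpace ℝ (Fin n)) → ((EuclideanSpace ℝ (Fin n)) →L[ℝ] (EuclideanSpace ℝ (Fin n))))
    (hDf : ∀ t x, 0 ≤ t → HasFDerivAt (f t) (Df t x) x)
    (hDfcont : Continuous fun p : ℝ × (EuclideanSpace ℝ (Fin n)) => Df p.1 p.2)
    (Dy : ℝ → (EuclideanSpace ℝ (Fin n)) → ℝ → ((EuclideanSpace ℝ (Fin n)) →L[ℝ] (EuclideanSpace ℝ (Fin n))))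
    (hDyinit : ∀ τ η, Dy τ η τ = ContinuousLinearMap.id ℝ (EuclideanSpace ℝ (Fin n)))
    (hDyode : ∀ τ η s, 0 ≤ s →
      HasDerivAt (Dy τ η) ((A s + Df s (y τ η s)).comp (Dy τ η s)) s)
    (hDy : ∀ τ η s, HasFDerivAt (fun ζ => y τ ζ s) (Dy τ η s) η) :
    ∀ t, 0 ≤ t → ∃ F : (EuclideanSpace ℝ (Fin n)) ≃ₜ (EuclideanSpace ℝ (Fin n)),
      (∀ η : (EuclideanSpace ℝ (Fin n)), F η = η - ∫ s in (0:ℝ)..t, Φ t s (f s (y t η s))) ∧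
      ContDiff ℝ 1 (F : (EuclideanSpace ℝ (Fin n)) → (EuclideanSpace ℝ (Fin n))) ∧ ContDiff ℝ 1 (F.symm : (EuclideanSpace ℝ (Fin n)) → (EuclideanSpace ℝ (Fin n))) := by
  intro t ht
  -- pointwise inverse identities
  have happ : ∀ r (z : (EuclideanSpace ℝ (Fin n))), Φ r 0 (Φ 0 r z) = z := by
    intro r z
    have h1 : (Φ r 0).comp (Φ 0 r) = ContinuousLinearMap.id ℝ (EuclideanSpace ℝ (Fin n)) := by
      rw [hΦcocycle]; exact hΦid r
    have := congrArg (fun L : (EuclideanSpace ℝ (Fin n)) →L[ℝ] (EuclideanSpace ℝ (Fin n)) => L z) h1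
    simpa using this
  have happ' : ∀ r (z : (EuclideanSpace ℝ (Fin n))), Φ 0 r (Φ r 0 z) = z := by
    intro r z
    have h1 : (Φ 0 r).comp (Φ r 0) = ContinuousLinearMap.id ℝ (EuclideanSpace ℝ (Fin n)) := by
      rw [hΦcocycle]; exact hΦid 0
    have := congrArg (fun L : (EuclideanSpace ℝ (Fin n)) →L[ℝ] (EuclideanSpace ℝ (Fin n)) => L z) h1
    simpa using this
  -- operator-level derivative of r ↦ Φ r 0
  have hPd : ∀ r, HasDerivAt (fun r' => Φ r' 0) ((A r).comp (Φ r 0)) r := by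
    intro r
    apply opHasDerivAt
    intro ξ
    simpa using hΦderiv 0 ξ r
  -- continuity of r ↦ Φ 0 r (as inverse of r ↦ Φ r 0)
  have hmulPQ : ∀ r, (Φ r 0) * (Φ 0 r) = 1 := by
    intro r
    refine ContinuousLinearMap.ext fun z => ?_
    simpa [ContinuousLinearMap.mul_apply] using happ r z
  have hmulQP : ∀ r, (Φ 0 r) * (Φ r 0) = 1 := by
    intro r
    refine ContinuousLinearMap.ext fun z => ?_
    simpa [ContinuousLinearMap.mul_apply] using happ' r z
  have hQeq : (fun r : ℝ => Φ 0 r) = fun r => Ring.inverse (Φ r 0) := by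
    funext r
    exact (Ring.inverse_unit ⟨Φ r 0, Φ 0 r, hmulPQ r, hmulQP r⟩).symm
  have hQcont : Continuous (fun r : ℝ => Φ 0 r) := by
    rw [continuous_iff_continuousAt]
    intro r
    rw [hQeq]
    have h1 : ContinuousAt Ring.inverse (Φ r 0) :=
      NormedRing.inverse_continuousAt
        (⟨Φ r 0, Φ 0 r, hmulPQ r, hmulQP r⟩ : ((EuclideanSpace ℝ (Fin n)) →L[ℝ] (EuclideanSpace ℝ (Fin n)))ˣ)
    exact ContinuousAt.comp (x := r) (f := fun r' => Φ r' 0) h1 ((hPd r).continuousAt)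
  -- Lipschitz constants
  set L₀ : ℝ := M + γ with hL₀def
  have hL₀ : 0 < L₀ := add_pos hM hγ
  have hAnorm : ∀ (s : ℝ) (x z : (EuclideanSpace ℝ (Fin n))), ‖A (max s 0) x - A (max s 0) z‖ ≤ M * ‖x - z‖ := by
    intro s x z
    rw [← map_sub]
    exact ((A _).le_opNorm _).trans
      (mul_le_mul_of_nonneg_right (hAbdd _ (le_max_right _ _)) (norm_nonneg _))
  have hvfull : ∀ s : ℝ, LipschitzWith (Real.toNNReal L₀)
      (fun x : (EuclideanSpace ℝ (Fin n)) => A (max s 0) x + f (max s 0) x) := by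
    intro s
    apply LipschitzWith.of_dist_le_mul
    intro x z
    rw [dist_eq_norm, dist_eq_norm, Real.coe_toNNReal _ hL₀.le]
    have h1 : A (max s 0) x + f (max s 0) x - (A (max s 0) z + f (max s 0) z)
        = (A (max s 0) x - A (max s 0) z) + (f (max s 0) x - f (max s 0) z) := by abel
    rw [h1]
    calc ‖(A (max s 0) x - A (max s 0) z) + (f (max s 0) x - f (max s 0) z)‖
        ≤ ‖A (max s 0) x - A (max s 0) z‖ + ‖f (max s 0) x - f (max s 0) z‖ := norm_add_le _ _
      _ ≤ M * ‖x - z‖ + γ * ‖x - z‖ :=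
          add_le_add (hAnorm s x z) (hflip _ x z (le_max_right _ _))
      _ = L₀ * ‖x - z‖ := by rw [hL₀def]; ring
  -- flow property and inverse flow property
  have hflow : ∀ η s, 0 ≤ s → y 0 (y t η 0) s = y t η s := by
    intro η s hs
    have key := ODE_uniq_fwd (v := fun s x => A (max s 0) x + f (max s 0) x) hvfull (u := y 0 (y t η 0)) (w := y t η) (a := 0) (b := max s t)
      (fun r hr => by simpa [max_eq_left hr.1] using hyderiv 0 (y t η 0) r hr.1)
      (fun r hr => by simpa [max_eq_left hr.1] using hyderiv t η r hr.1)
      (by rw [hyinit])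
    exact key ⟨hs, le_max_left s t⟩
  have hpsiphi : ∀ ξ : (EuclideanSpace ℝ (Fin n)), y t (y 0 ξ t) 0 = ξ := by
    intro ξ
    have key := ODE_uniq_bwd (v := fun s x => A (max s 0) x + f (max s 0) x) hvfull (u := y t (y 0 ξ t)) (w := y 0 ξ) (a := 0) (b := t)
      (fun r hr => by simpa [max_eq_left hr.1] using hyderiv t (y 0 ξ t) r hr.1)
      (fun r hr => by simpa [max_eq_left hr.1] using hyderiv 0 ξ r hr.1)
      (by rw [hyinit])
    have h0 := key ⟨le_rfl, ht⟩
    rw [h0, hyinit]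
  -- variation of constants: the integral identity
  have hint : ∀ η : (EuclideanSpace ℝ (Fin n)), (∫ s in (0:ℝ)..t, Φ t s (f s (y t η s))) = η - Φ t 0 (y t η 0) := by
    intro η
    set ξ := y t η 0 with hξdef
    have hccont : ContinuousOn (y 0 ξ) (Ici 0) :=
      fun r hr => (hyderiv 0 ξ r hr).continuousAt.continuousWithinAt
    have hcmax : Continuous (fun r : ℝ => y 0 ξ (max r 0)) :=
      hccont.comp_continuous (continuous_id.max continuous_const) (fun x => Set.mem_Ici.mpr (le_max_right _ _))
    have hgcont : Continuous (fun r : ℝ => f (max r 0) (y 0 ξ (max r 0))) :=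
      hfcont.comp ((continuous_id.max continuous_const).prodMk hcmax)
    have hhcont : Continuous (fun r : ℝ => Φ 0 (max r 0) (f (max r 0) (y 0 ξ (max r 0)))) :=
      Continuous.clm_apply (hQcont.comp (continuous_id.max continuous_const)) hgcont
    have hJd : ∀ τ : ℝ, HasDerivAt
        (fun τ' => ∫ r in (0:ℝ)..τ', Φ 0 (max r 0) (f (max r 0) (y 0 ξ (max r 0))))
        (Φ 0 (max τ 0) (f (max τ 0) (y 0 ξ (max τ 0)))) τ :=
      fun τ => (hhcont.integral_hasStrictDerivAt 0 τ).hasDerivAt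
    have hlipM : ∀ s : ℝ, LipschitzWith (Real.toNNReal M)
        (fun x : (EuclideanSpace ℝ (Fin n)) => A (max s 0) x + f (max s 0) (y 0 ξ (max s 0))) := by
      intro s
      apply LipschitzWith.of_dist_le_mul
      intro x z
      rw [dist_eq_norm, dist_eq_norm, Real.coe_toNNReal _ hM.le]
      have h1 : A (max s 0) x + f (max s 0) (y 0 ξ (max s 0))
          - (A (max s 0) z + f (max s 0) (y 0 ξ (max s 0)))
          = A (max s 0) x - A (max s 0) z := by abel
      rw [h1]
      exact hAnorm s x z
    have hud : ∀ τ ∈ Icc (0:ℝ) t, HasDerivAt (fun τ' => y 0 ξ τ' - Φ τ' 0 ξ)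
        (A (max τ 0) (y 0 ξ τ - Φ τ 0 ξ) + f (max τ 0) (y 0 ξ (max τ 0))) τ := by
      intro τ hτ
      have h1 := (hyderiv 0 ξ τ hτ.1).sub (hΦderiv 0 ξ τ)
      refine h1.congr_deriv ?_
      rw [max_eq_left hτ.1, map_sub]
      abel
    have hId : ∀ τ ∈ Icc (0:ℝ) t, HasDerivAt
        (fun τ' => Φ τ' 0 (∫ r in (0:ℝ)..τ', Φ 0 (max r 0) (f (max r 0) (y 0 ξ (max r 0)))))
        (A (max τ 0) (Φ τ 0 (∫ r in (0:ℝ)..τ, Φ 0 (max r 0) (f (max r 0) (y 0 ξ (max r 0)))))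
          + f (max τ 0) (y 0 ξ (max τ 0))) τ := by
      intro τ hτ
      have h1 := (hPd τ).clm_apply (hJd τ)
      refine h1.congr_deriv ?_
      rw [max_eq_left hτ.1]
      simp only [ContinuousLinearMap.comp_apply]
      rw [happ]
    have hEq := ODE_uniq_fwd (v := fun s x => A (max s 0) x + f (max s 0) (y 0 ξ (max s 0))) hlipM
      (u := fun τ' => y 0 ξ τ' - Φ τ' 0 ξ)
      (w := fun τ' => Φ τ' 0 (∫ r in (0:ℝ)..τ', Φ 0 (max r 0) (f (max r 0) (y 0 ξ (max r 0)))))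
      (a := 0) (b := t) hud hId
      (by simp [hyinit, hΦid])
    have h3 : y 0 ξ t - Φ t 0 ξ
        = Φ t 0 (∫ r in (0:ℝ)..t, Φ 0 (max r 0) (f (max r 0) (y 0 ξ (max r 0)))) :=
      hEq ⟨ht, le_rfl⟩
    have hcong : (∫ s in (0:ℝ)..t, Φ t s (f s (y t η s)))
        = ∫ s in (0:ℝ)..t, Φ t 0 (Φ 0 (max s 0) (f (max s 0) (y 0 ξ (max s 0)))) := by
      apply intervalIntegral.integral_congr
      intro s hs
      rw [Set.uIcc_of_le ht] at hs
      show Φ t s (f s (y t η s)) = Φ t 0 (Φ 0 (max s 0) (f (max s 0) (y 0 ξ (max s 0))))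
      rw [max_eq_left hs.1, ← hflow η s hs.1]
      have := congrArg (fun L : (EuclideanSpace ℝ (Fin n)) →L[ℝ] (EuclideanSpace ℝ (Fin n)) => L (f s (y 0 ξ s))) (hΦcocycle t 0 s)
      simpa using this.symm
    rw [hcong, ContinuousLinearMap.intervalIntegral_comp_comm _ (hhcont.intervalIntegrable 0 t),
      ← h3]
    have hyt : y 0 ξ t = η := by rw [hξdef, hflow η t ht, hyinit]
    rw [hyt]
  -- bound on Df
  have hDfb : ∀ s (x : (EuclideanSpace ℝ (Fin n))), 0 ≤ s → ‖Df s x‖ ≤ γ := by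
    intro s x hs
    have hlip : LipschitzWith (Real.toNNReal γ) (f s) := by
      apply LipschitzWith.of_dist_le_mul
      intro a b
      rw [dist_eq_norm, dist_eq_norm, Real.coe_toNNReal _ hγ.le]
      exact hflip s a b hs
    have := (hDf s x hs).le_of_lipschitz hlip
    rwa [Real.coe_toNNReal _ hγ.le] at this
  -- continuous dependence on initial data
  have hcontdep : ∀ τ, 0 ≤ τ → τ ≤ t → ∀ ζ η' : (EuclideanSpace ℝ (Fin n)), ∀ s ∈ Icc (0:ℝ) t,
      ‖y τ ζ s - y τ η' s‖ ≤ Real.exp (L₀ * t) * ‖ζ - η'‖ := by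
    intro τ hτ0 hτt ζ η' s hs
    have key := gronwall_two_sided (g := fun r => y τ ζ r - y τ η' r)
      (g' := fun r => A r (y τ ζ r - y τ η' r) + (f r (y τ ζ r) - f r (y τ η' r)))
      (δ := ‖ζ - η'‖) (ε := 0) (a := 0) (b := t) (τ := τ)
      (norm_nonneg _) hL₀ le_rfl hτ0 hτt
      (fun r hr => by
        have h1 := (hyderiv τ ζ r hr.1).sub (hyderiv τ η' r hr.1)
        convert h1 using 1
        · rfl
        simp only [map_sub]
        abel)
      (by simp [hyinit])
      (fun r hr => by
        have h1 : ‖A r (y τ ζ r - y τ η' r)‖ ≤ M * ‖y τ ζ r - y τ η' r‖ :=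
          ((A r).le_opNorm _).trans
            (mul_le_mul_of_nonneg_right (hAbdd r hr.1) (norm_nonneg _))
        have h2 : ‖f r (y τ ζ r) - f r (y τ η' r)‖ ≤ γ * ‖y τ ζ r - y τ η' r‖ :=
          hflip r _ _ hr.1
        calc ‖A r (y τ ζ r - y τ η' r) + (f r (y τ ζ r) - f r (y τ η' r))‖
            ≤ ‖A r (y τ ζ r - y τ η' r)‖ + ‖f r (y τ ζ r) - f r (y τ η' r)‖ := norm_add_le _ _
          _ ≤ L₀ * ‖y τ ζ r - y τ η' r‖ + 0 := by rw [hL₀def]; nlinarith)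
      s hs
    calc ‖y τ ζ s - y τ η' s‖ ≤ gronwallBound ‖ζ - η'‖ L₀ 0 (t - 0) := key
      _ = Real.exp (L₀ * t) * ‖ζ - η'‖ := by rw [sub_zero, gronwallBound_ε0]; ring
  -- bound on Dy
  have hDybound : ∀ τ, 0 ≤ τ → τ ≤ t → ∀ ζ : (EuclideanSpace ℝ (Fin n)), ∀ s ∈ Icc (0:ℝ) t,
      ‖Dy τ ζ s‖ ≤ Real.exp (L₀ * t) := by
    intro τ hτ0 hτt ζ s hs
    have key := gronwall_two_sided (g := Dy τ ζ)
      (g' := fun r => (A r + Df r (y τ ζ r)).comp (Dy τ ζ r))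
      (δ := 1) (ε := 0) (a := 0) (b := t) (τ := τ) zero_le_one hL₀ le_rfl hτ0 hτt
      (fun r hr => hDyode τ ζ r hr.1)
      (by rw [hDyinit]; exact ContinuousLinearMap.norm_id_le)
      (fun r hr => by
        have h1 : ‖A r + Df r (y τ ζ r)‖ ≤ L₀ := by
          rw [hL₀def]
          exact (norm_add_le _ _).trans (add_le_add (hAbdd r hr.1) (hDfb r _ hr.1))
        have h2 := ContinuousLinearMap.opNorm_comp_le (A r + Df r (y τ ζ r)) (Dy τ ζ r)
        calc ‖(A r + Df r (y τ ζ r)).comp (Dy τ ζ r)‖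
            ≤ ‖A r + Df r (y τ ζ r)‖ * ‖Dy τ ζ r‖ := h2
          _ ≤ L₀ * ‖Dy τ ζ r‖ + 0 := by nlinarith [norm_nonneg (Dy τ ζ r)])
      s hs
    calc ‖Dy τ ζ s‖ ≤ gronwallBound 1 L₀ 0 (t - 0) := key
      _ = Real.exp (L₀ * t) := by rw [sub_zero, gronwallBound_ε0, one_mul]
  -- continuity of Dy in the initial condition
  have hDycont : ∀ τ, 0 ≤ τ → τ ≤ t → ∀ s₀ ∈ Icc (0:ℝ) t,
      Continuous (fun ζ : (EuclideanSpace ℝ (Fin n)) => Dy τ ζ s₀) := by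
    intro τ hτ0 hτt s₀ hs₀
    rw [continuous_iff_continuousAt]
    intro η
    rw [Metric.continuousAt_iff]
    intro ε hε
    set CW := Real.exp (L₀ * t) with hCWdef
    have hCW : (0:ℝ) < CW := Real.exp_pos _
    have hCW1 : (1:ℝ) ≤ CW := Real.one_le_exp (mul_nonneg hL₀.le ht)
    set Cg := (Real.exp (L₀ * t) - 1) / L₀ with hCgdef
    have hCg : 0 ≤ Cg := div_nonneg (by nlinarith) hL₀.le
    have hgb : ∀ d : ℝ, gronwallBound 0 L₀ d t = d * Cg := by
      intro d
      rw [gronwallBound_of_K_ne_0 hL₀.ne', hCgdef]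
      field_simp
      ring
    have hyc : ContinuousOn (fun s => y τ η s) (Icc 0 t) :=
      fun s hs => (hyderiv τ η s hs.1).continuousAt.continuousWithinAt
    obtain ⟨R₀, hR₀⟩ := (isCompact_Icc (a := (0:ℝ)) (b := t)).exists_bound_of_continuousOn hyc
    set C : Set (ℝ × (EuclideanSpace ℝ (Fin n))) :=
      Icc (0:ℝ) t ×ˢ Metric.closedBall (0 : (EuclideanSpace ℝ (Fin n))) (R₀ + 1) with hCdef
    have hCcomp : IsCompact C := (isCompact_Icc).prod (isCompact_closedBall _ _)
    have hUC := hCcomp.uniformContinuousOn_of_continuous hDfcont.continuousOn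
    rw [Metric.uniformContinuousOn_iff] at hUC
    set d := ε / (CW * Cg + 1) with hddef
    have hd0 : 0 < d := div_pos hε (by positivity)
    obtain ⟨δ₁, hδ₁0, hδ₁⟩ := hUC d hd0
    refine ⟨min (δ₁ / (CW + 1)) (1 / CW), by positivity, ?_⟩
    intro ζ hζ
    rw [dist_eq_norm] at hζ ⊢
    have hζ1 : ‖ζ - η‖ < δ₁ / (CW + 1) := lt_of_lt_of_le hζ (min_le_left _ _)
    have hζ2 : ‖ζ - η‖ < 1 / CW := lt_of_lt_of_le hζ (min_le_right _ _)
    have hζ0 : 0 ≤ ‖ζ - η‖ := norm_nonneg _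
    have hyd : ∀ s ∈ Icc (0:ℝ) t, ‖y τ ζ s - y τ η s‖ ≤ CW * ‖ζ - η‖ :=
      fun s hs => hcontdep τ hτ0 hτt ζ η s hs
    have hmemη : ∀ s ∈ Icc (0:ℝ) t, (s, y τ η s) ∈ C := by
      intro s hs
      refine ⟨hs, ?_⟩
      rw [Metric.mem_closedBall, dist_zero_right]
      linarith [hR₀ s hs]
    have hmemζ : ∀ s ∈ Icc (0:ℝ) t, (s, y τ ζ s) ∈ C := by
      intro s hs
      refine ⟨hs, ?_⟩
      rw [Metric.mem_closedBall, dist_zero_right]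
      have h1 : ‖y τ ζ s‖ ≤ ‖y τ η s‖ + ‖y τ ζ s - y τ η s‖ := by
        have h0 := norm_add_le (y τ η s) (y τ ζ s - y τ η s)
        have : y τ η s + (y τ ζ s - y τ η s) = y τ ζ s := by abel
        rwa [this] at h0
      have h2 : CW * ‖ζ - η‖ ≤ 1 := by
        have := (lt_div_iff₀ hCW).mp hζ2
        nlinarith
      have := hyd s hs
      linarith [hR₀ s hs]
    have hDfd : ∀ s ∈ Icc (0:ℝ) t, ‖Df s (y τ ζ s) - Df s (y τ η s)‖ ≤ d := by
      intro s hs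
      have hdist : dist ((s, y τ ζ s) : ℝ × (EuclideanSpace ℝ (Fin n))) (s, y τ η s) < δ₁ := by
        rw [Prod.dist_eq]
        have h1 : dist s s = 0 := dist_self s
        have h2 : dist (y τ ζ s) (y τ η s) < δ₁ := by
          rw [dist_eq_norm]
          have := hyd s hs
          have h3 : CW * ‖ζ - η‖ < δ₁ := by
            have h4 : CW * ‖ζ - η‖ < CW * (δ₁ / (CW + 1)) := by
              apply mul_lt_mul_of_pos_left hζ1 hCW
            have h5 : CW * (δ₁ / (CW + 1)) < δ₁ := by
              rw [mul_div_assoc']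
              rw [div_lt_iff₀ (by positivity)]
              nlinarith
            linarith
          linarith
        rw [h1]
        exact max_lt (by positivity) h2
      have := hδ₁ _ (hmemζ s hs) _ (hmemη s hs) hdist
      rw [dist_eq_norm] at this
      exact this.le
    have hkey := gronwall_two_sided (g := fun r => Dy τ ζ r - Dy τ η r)
      (g' := fun r => (A r + Df r (y τ ζ r)).comp (Dy τ ζ r - Dy τ η r)
        + (Df r (y τ ζ r) - Df r (y τ η r)).comp (Dy τ η r))
      (δ := 0) (ε := d * CW) (a := 0) (b := t) (τ := τ) le_rfl hL₀ (by positivity) hτ0 hτt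
      (fun r hr => by
        have h1 := (hDyode τ ζ r hr.1).sub (hDyode τ η r hr.1)
        convert h1 using 1
        · rfl
        refine ContinuousLinearMap.ext fun v => ?_
        simp only [ContinuousLinearMap.add_apply, ContinuousLinearMap.comp_apply,
          ContinuousLinearMap.sub_apply, map_sub]
        abel)
      (by simp only [hDyinit, sub_self, norm_zero, le_refl])
      (fun r hr => by
        have h1 : ‖A r + Df r (y τ ζ r)‖ ≤ L₀ := by
          rw [hL₀def]
          exact (norm_add_le _ _).trans (add_le_add (hAbdd r hr.1) (hDfb r _ hr.1))
        have h2 := ContinuousLinearMap.opNorm_comp_le (A r + Df r (y τ ζ r))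
          (Dy τ ζ r - Dy τ η r)
        have h3 := ContinuousLinearMap.opNorm_comp_le (Df r (y τ ζ r) - Df r (y τ η r))
          (Dy τ η r)
        have h4 := hDfd r hr
        have h5 := hDybound τ hτ0 hτt η r hr
        calc ‖(A r + Df r (y τ ζ r)).comp (Dy τ ζ r - Dy τ η r)
              + (Df r (y τ ζ r) - Df r (y τ η r)).comp (Dy τ η r)‖
            ≤ ‖(A r + Df r (y τ ζ r)).comp (Dy τ ζ r - Dy τ η r)‖
              + ‖(Df r (y τ ζ r) - Df r (y τ η r)).comp (Dy τ η r)‖ := norm_add_le _ _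
          _ ≤ L₀ * ‖Dy τ ζ r - Dy τ η r‖ + d * CW := by
              refine add_le_add (h2.trans ?_) (h3.trans ?_)
              · exact mul_le_mul_of_nonneg_right h1 (norm_nonneg _)
              · exact mul_le_mul h4 h5 (norm_nonneg _) hd0.le)
      s₀ hs₀
    have hfin : ‖Dy τ ζ s₀ - Dy τ η s₀‖ ≤ d * CW * Cg := by
      have h6 := hkey
      rw [sub_zero, hgb] at h6
      exact h6
    calc ‖Dy τ ζ s₀ - Dy τ η s₀‖ ≤ d * CW * Cg := hfin
      _ < ε := by
        rw [hddef]
        rw [div_mul_eq_mul_div, div_mul_eq_mul_div, div_lt_iff₀ (by positivity)]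
        nlinarith
  -- assembly
  have hFd : ∀ η : (EuclideanSpace ℝ (Fin n)),
      HasFDerivAt (fun ζ => Φ t 0 (y t ζ 0)) ((Φ t 0).comp (Dy t η 0)) η :=
    fun η => ((Φ t 0).hasFDerivAt).comp η (hDy t η 0)
  have hFc1 : ContDiff ℝ 1 (fun ζ : (EuclideanSpace ℝ (Fin n)) => Φ t 0 (y t ζ 0)) := by
    rw [contDiff_one_iff_fderiv]
    refine ⟨fun η => (hFd η).differentiableAt, ?_⟩
    have heq : (fderiv ℝ (fun ζ : (EuclideanSpace ℝ (Fin n)) => Φ t 0 (y t ζ 0)))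
        = fun η => (Φ t 0).comp (Dy t η 0) := funext fun η => (hFd η).fderiv
    rw [heq]
    have h1 := ((ContinuousLinearMap.compL ℝ (EuclideanSpace ℝ (Fin n))
      (EuclideanSpace ℝ (Fin n)) (EuclideanSpace ℝ (Fin n)) (Φ t 0)).continuous).comp
      (hDycont t ht le_rfl 0 ⟨le_rfl, ht⟩)
    simpa [Function.comp_def] using h1
  have hGd : ∀ x : (EuclideanSpace ℝ (Fin n)),
      HasFDerivAt (fun z => y 0 (Φ 0 t z) t) ((Dy 0 (Φ 0 t x) t).comp (Φ 0 t)) x :=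
    fun x => (hDy 0 (Φ 0 t x) t).comp x ((Φ 0 t).hasFDerivAt)
  have hGc1 : ContDiff ℝ 1 (fun z : (EuclideanSpace ℝ (Fin n)) => y 0 (Φ 0 t z) t) := by
    rw [contDiff_one_iff_fderiv]
    refine ⟨fun x => (hGd x).differentiableAt, ?_⟩
    have heq : (fderiv ℝ (fun z : (EuclideanSpace ℝ (Fin n)) => y 0 (Φ 0 t z) t))
        = fun x => (Dy 0 (Φ 0 t x) t).comp (Φ 0 t) := funext fun x => (hGd x).fderiv
    rw [heq]
    have h0 : Continuous (fun x : (EuclideanSpace ℝ (Fin n)) => Dy 0 (Φ 0 t x) t) :=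
      (hDycont 0 le_rfl ht t ⟨ht, le_rfl⟩).comp (Φ 0 t).continuous
    have h1 := (((ContinuousLinearMap.compL ℝ (EuclideanSpace ℝ (Fin n))
      (EuclideanSpace ℝ (Fin n)) (EuclideanSpace ℝ (Fin n))).flip (Φ 0 t)).continuous).comp h0
    simpa [Function.comp_def] using h1
  refine ⟨⟨⟨fun η => Φ t 0 (y t η 0), fun x => y 0 (Φ 0 t x) t, ?_, ?_⟩,
    hFc1.continuous, hGc1.continuous⟩, ?_, ?_, ?_⟩
  · intro η
    show y 0 (Φ 0 t (Φ t 0 (y t η 0))) t = η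
    rw [happ' t (y t η 0), hflow η t ht, hyinit]
  · intro x
    show Φ t 0 (y t (y 0 (Φ 0 t x) t) 0) = x
    rw [hpsiphi (Φ 0 t x), happ t x]
  · intro η
    show Φ t 0 (y t η 0) = η - ∫ s in (0:ℝ)..t, Φ t s (f s (y t η s))
    rw [hint η]
    abel
  · exact hFc1
  · exact hGc1
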